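/- Let $S$ be a spectral random vector in dimension $d$, with $\gamma = 0$ case: set $X_j = \sigma_j (S_j + E)$ with $\sigma \in (0,\infty)^d$ and $E \sim \mathrm{Exp}(1)$ independent of $S$. Let $a \in [0,\infty)^d$ with $a^\top \sigma > 0$ and $P[a^\top X > 0] > 0$. Then for every $x \ge 0$, $P[a^\top X > x \mid a^\top X > 0] = e^{-x/(a^\top \sigma)}$; i.e., conditionally on being positive, the linear combination $a^\top X$ is exponentially distributed with mean $a^\top \sigma$. -/

import Mathlib

open MeasureTheory ProbabilityTheory

private lemma ereal_sum_eq_bot {ι : Type*} (s : Finset ι) (f : ι → EReal) {i : ι}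
    (hi : i ∈ s) (h : f i = ⊥) : ∑ j ∈ s, f j = ⊥ := by
  classical
  rw [← Finset.add_sum_erase _ _ hi, h, EReal.bot_add]

private lemma ereal_coe_fsum {ι : Type*} (s : Finset ι) (f : ι → ℝ) :
    ((∑ i ∈ s, f i : ℝ) : EReal) = ∑ i ∈ s, (f i : EReal) := by
  classical
  induction s using Finset.induction_on with
  | empty => simp
  | insert _ _ h ih => rw [Finset.sum_insert h, Finset.sum_insert h, EReal.coe_add, ih]

/-- Case `γ = 0` of the linear-combination stability: with `X_j = σ_j (S_j + E)`
for a spectral random vector `S` and independent unit exponential `E`, and a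
nonnegative vector `a` with `aᵀσ > 0` and `P[aᵀX > 0] > 0`, conditionally on being
positive, `aᵀX` is exponentially distributed with mean `aᵀσ`: for all `x ≥ 0`,
`P[aᵀX > x | aᵀX > 0] = e^{-x/aᵀσ}`. -/
theorem gp_linear_combination_gumbel
    {Ω : Type*} [MeasurableSpace Ω] (μ : Measure Ω) [IsProbabilityMeasure μ]
    {d : ℕ} (hd : 0 < d)
    (σ : Fin d → ℝ) (hσ : ∀ j, 0 < σ j)
    (a : Fin d → ℝ) (ha : ∀ j, 0 ≤ a j) (haσ : 0 < ∑ j, a j * σ j)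
    (S : Ω → Fin d → EReal) (E : Ω → ℝ)
    (hSmeas : Measurable S) (hEmeas : Measurable E)
    (hSle : ∀ ω j, S ω j ≤ 0)
    (hSmax : ∀ᵐ ω ∂μ, (⨆ j, S ω j) = 0)
    (hSbot : ∀ j, 0 < μ {ω | ⊥ < S ω j})
    (hE : ∀ t : ℝ, 0 ≤ t → μ {ω | t < E ω} = ENNReal.ofReal (Real.exp (-t)))
    (hindep : IndepFun S E μ)
    (X : Ω → Fin d → EReal)
    (hX : ∀ ω j, X ω j = (σ j : EReal) * (S ω j + (E ω : EReal)))
    (hpos : 0 < μ {ω | (0 : EReal) < ∑ j, (a j : EReal) * X ω j}) :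
    ∀ x : ℝ, 0 ≤ x →
      (μ {ω | (x : EReal) < ∑ j, (a j : EReal) * X ω j}).toReal /
          (μ {ω | (0 : EReal) < ∑ j, (a j : EReal) * X ω j}).toReal =
        Real.exp (-x / ∑ j, a j * σ j) := by
  classical
  set c : ℝ := ∑ j, a j * σ j with hc
  have hcpos : 0 < c := haσ
  -- the "bad" set predicate on spectral values
  set Bad : (Fin d → EReal) → Prop := fun s => ∃ j, a j * σ j ≠ 0 ∧ s j = ⊥ with hBad
  have hBadMeas : MeasurableSet {s : Fin d → EReal | Bad s} := by
    have : {s : Fin d → EReal | Bad s}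
        = ⋃ j, {s : Fin d → EReal | a j * σ j ≠ 0 ∧ s j = ⊥} := by
      ext s; simp [hBad, Set.mem_iUnion]
    rw [this]
    refine MeasurableSet.iUnion fun j => ?_
    by_cases h : a j * σ j ≠ 0
    · have heq : {s : Fin d → EReal | a j * σ j ≠ 0 ∧ s j = ⊥}
          = (fun s : Fin d → EReal => s j) ⁻¹' {⊥} := by ext s; simp [h]
      rw [heq]
      exact (measurable_pi_apply j) (measurableSet_singleton ⊥)
    · have heq : {s : Fin d → EReal | a j * σ j ≠ 0 ∧ s j = ⊥} = ∅ := by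
        ext s; simp [h]
      rw [heq]; exact MeasurableSet.empty
  -- real proxy
  set g : (Fin d → EReal) → ℝ :=
    fun s => if Bad s then 1 else ∑ j, a j * σ j * (s j).toReal with hg
  have hgMeas : Measurable g := by
    refine Measurable.ite hBadMeas measurable_const ?_
    exact Finset.measurable_sum _ fun j _ =>
      (((measurable_pi_apply j).ereal_toReal).const_mul _)
  set W : Ω → ℝ := fun ω => g (S ω) with hW
  have hWMeas : Measurable W := hgMeas.comp hSmeas
  -- pointwise description of the sum
  have hsum : ∀ ω, ∑ j, (a j : EReal) * X ω j =
      if Bad (S ω) then (⊥ : EReal)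
      else (((∑ j, a j * σ j * (S ω j).toReal) + c * E ω : ℝ) : EReal) := by
    intro ω
    by_cases hb : Bad (S ω)
    · simp only [hb, if_true]
      obtain ⟨j0, hj0ne, hj0bot⟩ := hb
      have haj0 : 0 < a j0 := by
        rcases (ha j0).lt_or_eq with h | h
        · exact h
        · exact absurd (by rw [← h]; ring) hj0ne
      refine ereal_sum_eq_bot Finset.univ _ (Finset.mem_univ j0) ?_
      rw [hX ω j0, hj0bot, EReal.bot_add, EReal.coe_mul_bot_of_pos (hσ j0),
        EReal.coe_mul_bot_of_pos haj0]
    · simp only [hb, if_false]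
      have hterm : ∀ j, (a j : EReal) * X ω j
          = ((a j * σ j * (S ω j).toReal + a j * σ j * E ω : ℝ) : EReal) := by
        intro j
        by_cases hz : a j * σ j ≠ 0 ∧ S ω j = ⊥
        · exact absurd ⟨j, hz⟩ hb
        · rw [hX ω j]
          push_neg at hz
          by_cases haj : a j = 0
          · simp [haj]
          · have hne : S ω j ≠ ⊥ := hz (by
              intro h; exact haj (by
                have := mul_eq_zero.mp h
                rcases this with h' | h'
                · exact h'
                · exact absurd h' (ne_of_gt (hσ j))))
            have hnetop : S ω j ≠ ⊤ := by
              intro h; exact absurd (h ▸ hSle ω j) (by simp)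
            lift S ω j to ℝ using ⟨hnetop, hne⟩ with s hs
            rw [EReal.toReal_coe]
            norm_cast
            ring
      rw [Finset.sum_congr rfl (fun j _ => hterm j), ← ereal_coe_fsum]
      norm_cast
      rw [Finset.sum_add_distrib, ← Finset.sum_mul]
  -- event description
  have hWle : ∀ ω, ¬ Bad (S ω) → W ω ≤ 0 := by
    intro ω hbω
    simp only [hW, hg, hbω, if_false]
    refine Finset.sum_nonpos fun j _ => ?_
    have h1 : 0 ≤ a j * σ j := mul_nonneg (ha j) (hσ j).le
    have h2 : (S ω j).toReal ≤ 0 := by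
      rcases eq_or_ne (S ω j) ⊥ with h | h
      · simp [h]
      · have hnetop : S ω j ≠ ⊤ := by
          intro h'; exact absurd (h' ▸ hSle ω j) (by simp)
        have h0 : (S ω j).toReal ≤ (0 : EReal).toReal :=
          EReal.toReal_le_toReal (hSle ω j) h (by simp)
        simpa using h0
    exact mul_nonpos_of_nonneg_of_nonpos h1 h2
  have hevent : ∀ x : ℝ, {ω | (x : EReal) < ∑ j, (a j : EReal) * X ω j}
      = (fun ω => (W ω, E ω)) ⁻¹' {p : ℝ × ℝ | p.1 ≤ 0 ∧ (x - p.1) / c < p.2} := by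
    intro x
    ext ω
    simp only [Set.mem_setOf_eq, Set.mem_preimage]
    rw [hsum ω]
    by_cases hbω : Bad (S ω)
    · simp only [hbω, if_true]
      constructor
      · intro h; exact absurd h (by simp)
      · rintro ⟨h1, -⟩
        exfalso
        have : W ω = 1 := by simp [hW, hg, hbω]
        rw [this] at h1; linarith
    · simp only [hbω, if_false]
      have hWω : W ω = ∑ j, a j * σ j * (S ω j).toReal := by simp [hW, hg, hbω]
      rw [EReal.coe_lt_coe_iff]
      constructor
      · intro h
        refine ⟨hWle ω hbω, ?_⟩
        rw [hWω, div_lt_iff₀ hcpos]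
        nlinarith [hWω]
      · rintro ⟨-, h2⟩
        rw [hWω, div_lt_iff₀ hcpos] at h2
        nlinarith [hWω]
  -- independence of W and E
  have hWE : IndepFun W E μ := hindep.comp hgMeas measurable_id
  have hmap : μ.map (fun ω => (W ω, E ω)) = (μ.map W).prod (μ.map E) :=
    (indepFun_iff_map_prod_eq_prod_map_map hWMeas.aemeasurable hEmeas.aemeasurable).mp hWE
  -- key formula
  have hA : ∀ x : ℝ, MeasurableSet {p : ℝ × ℝ | p.1 ≤ 0 ∧ (x - p.1) / c < p.2} := by
    intro x
    refine MeasurableSet.inter ?_ ?_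
    · exact measurable_fst measurableSet_Iic
    · exact measurableSet_lt ((measurable_const.sub measurable_fst).div_const c) measurable_snd
  have key : ∀ x : ℝ, 0 ≤ x →
      μ {ω | (x : EReal) < ∑ j, (a j : EReal) * X ω j}
        = ENNReal.ofReal (Real.exp (-x / c)) *
          ∫⁻ w, (if w ≤ 0 then ENNReal.ofReal (Real.exp (w / c)) else 0) ∂(μ.map W) := by
    intro x hx
    rw [hevent x, ← Measure.map_apply (hWMeas.prodMk hEmeas) (hA x), hmap,
      Measure.prod_apply (hA x)]
    have hinner : ∀ w : ℝ,
        (μ.map E) (Prod.mk w ⁻¹' {p : ℝ × ℝ | p.1 ≤ 0 ∧ (x - p.1) / c < p.2})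
          = ENNReal.ofReal (Real.exp (-x / c)) *
            (if w ≤ 0 then ENNReal.ofReal (Real.exp (w / c)) else 0) := by
      intro w
      by_cases hw : w ≤ 0
      · have hset : Prod.mk w ⁻¹' {p : ℝ × ℝ | p.1 ≤ 0 ∧ (x - p.1) / c < p.2}
            = Set.Ioi ((x - w) / c) := by
          ext e; simp [hw, Set.mem_Ioi]
        rw [hset, Measure.map_apply hEmeas measurableSet_Ioi]
        have h1 : E ⁻¹' Set.Ioi ((x - w) / c) = {ω | (x - w) / c < E ω} := rfl
        have ht : 0 ≤ (x - w) / c := div_nonneg (by linarith) hcpos.le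
        rw [h1, hE _ ht, if_pos hw, ← ENNReal.ofReal_mul (Real.exp_nonneg _),
          ← Real.exp_add]
        congr 2
        field_simp
        ring
      · have hset : Prod.mk w ⁻¹' {p : ℝ × ℝ | p.1 ≤ 0 ∧ (x - p.1) / c < p.2} = ∅ := by
          ext e; simp [hw]
        rw [hset, if_neg hw, mul_zero]
        simp
    rw [lintegral_congr hinner]
    exact lintegral_const_mul' _ _ ENNReal.ofReal_ne_top
  -- conclude
  intro x hx
  have h0 := key 0 le_rfl
  have hxeq := key x hx
  rw [neg_zero, zero_div, Real.exp_zero, ENNReal.ofReal_one, one_mul] at h0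
  simp only [EReal.coe_zero] at h0
  set K := ∫⁻ w, (if w ≤ 0 then ENNReal.ofReal (Real.exp (w / c)) else 0) ∂(μ.map W) with hK
  have hKne : K ≠ ⊤ := by
    rw [← h0]; exact measure_ne_top μ _
  have hKpos : 0 < K.toReal := by
    refine ENNReal.toReal_pos ?_ hKne
    intro h
    rw [h0, h] at hpos
    exact lt_irrefl 0 hpos
  rw [hxeq, h0, ENNReal.toReal_mul, ENNReal.toReal_ofReal (Real.exp_nonneg _)]
  rw [mul_div_assoc, div_self (ne_of_gt hKpos), mul_one]
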